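/- Let 0 ≤ r' ≤ r and O, O' ∈ ℝ^d with ‖O − O'‖ = r + r' − h for some 0 ≤ h ≤ r'. Then the d-dimensional Lebesgue measure of B(O, r) ∩ B(O', r') is at least (ω_{d−1} / (d · 2^{(d−1)/2})) · h^{(d+1)/2} · (r')^{(d−1)/2}, where ω_{d−1} is the volume of the (d−1)-dimensional unit Euclidean ball. -/

import Mathlib

open Set Metric ENNReal NNReal

noncomputable section

abbrev Euc (D : ℕ) := EuclideanSpace ℝ (Fin D)

/-- The medial axis of a set `S`: ambient points having at least two nearest points on `S`. -/
def medialAxis {D : ℕ} (S : Set (Euc D)) : Set (Euc D) :=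
  {z | ∃ x ∈ S, ∃ y ∈ S, x ≠ y ∧ dist z x = Metric.infDist z S ∧ dist z y = Metric.infDist z S}

/-- The reach of a set: the infimal distance from its medial axis to the set. -/
def reach {D : ℕ} (S : Set (Euc D)) : ℝ≥0∞ :=
  ⨅ z ∈ medialAxis S, EMetric.infEdist z S

/-- Geodesic (intrinsic) distance in `S`: infimum of lengths of continuous paths in `S`
joining `x` to `y` (`∞` if there is none). -/
def geodesicDist {D : ℕ} (S : Set (Euc D)) (x y : Euc D) : ℝ≥0∞ :=
  ⨅ (γ : ℝ → Euc D) (_ : ContinuousOn γ (Set.Icc 0 1))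
    (_ : Set.MapsTo γ (Set.Icc 0 1) S) (_ : γ 0 = x) (_ : γ 1 = y),
    eVariationOn γ (Set.Icc 0 1)

/-- The model space `ℝ^d × {0}^{D-d}` inside `ℝ^D`. -/
def fullModel (D d : ℕ) : Set (Euc D) := {x | ∀ i : Fin D, d ≤ (i : ℕ) → x i = 0}

/-- The model half-space `ℝ^{d-1} × ℝ₊ × {0}^{D-d}` inside `ℝ^D`. -/
def halfModel (D d : ℕ) : Set (Euc D) :=
  {x | (∀ i : Fin D, d ≤ (i : ℕ) → x i = 0) ∧ ∃ i : Fin D, (i : ℕ) + 1 = d ∧ 0 ≤ x i}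

/-- `p` is a point of `M` around which `M` is C²-parametrized by the given model set. -/
def IsChartedPoint {D : ℕ} (model : Set (Euc D)) (M : Set (Euc D)) (p : Euc D) : Prop :=
  ∃ (U V : Set (Euc D)) (Ψ Φ : Euc D → Euc D),
    IsOpen U ∧ IsOpen V ∧ (0 : Euc D) ∈ U ∧ p ∈ V ∧
    ContDiffOn ℝ 2 Ψ U ∧ ContDiffOn ℝ 2 Φ V ∧ Set.BijOn Ψ U V ∧
    (∀ x ∈ U, Φ (Ψ x) = x) ∧ Ψ 0 = p ∧ Ψ '' (U ∩ model) = M ∩ V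

/-- `M ⊆ ℝ^D` is a `d`-dimensional C² submanifold with (possibly empty) boundary. -/
def IsC2SubmanifoldWithBoundary {D : ℕ} (d : ℕ) (M : Set (Euc D)) : Prop :=
  IsClosed M ∧ ∀ p ∈ M, IsChartedPoint (fullModel D d) M p ∨ IsChartedPoint (halfModel D d) M p

/-- The (differential) boundary `∂M` of `M`: points carrying a half-space chart. -/
def boundaryOf {D : ℕ} (d : ℕ) (M : Set (Euc D)) : Set (Euc D) :=
  {p ∈ M | IsChartedPoint (halfModel D d) M p}

/-- The tangent space of `M` at `x`: the linear span of the tangent cone. -/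
def tangentSpaceAt {D : ℕ} (M : Set (Euc D)) (x : Euc D) : Submodule ℝ (Euc D) :=
  Submodule.span ℝ (tangentConeAt ℝ M x)

/-- The normal cone of `M` at `x`: the dual cone of the tangent cone. -/
def normalConeAt {D : ℕ} (M : Set (Euc D)) (x : Euc D) : Set (Euc D) :=
  {v | ∀ u ∈ tangentConeAt ℝ M x, (inner ℝ u v : ℝ) ≤ 0}

/-- Orthogonal projection onto a subspace, as a continuous linear map `E →L[ℝ] E`. -/
def projSub {D : ℕ} (T : Submodule ℝ (Euc D)) : Euc D →L[ℝ] Euc D :=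
  T.subtypeL.comp (T.orthogonalProjection)

/-- Angle between two linear subspaces: operator norm of the difference of projections. -/
def angleS {D : ℕ} (T T' : Submodule ℝ (Euc D)) : ℝ := ‖projSub T - projSub T'‖

/-- `η` is the unit outward-pointing normal of `M` at `p`:
the unit vector of `Nor(p,M) ∩ T_p M`. -/
def IsOutwardNormalAt {D : ℕ} (M : Set (Euc D)) (p η : Euc D) : Prop :=
  η ∈ normalConeAt M p ∧ η ∈ tangentSpaceAt M p ∧ ‖η‖ = 1

section Stmt6AuxSection
open MeasureTheory
namespace Stmt6Aux


lemma euc_normsq {m : ℕ} (x : EuclideanSpace ℝ (Fin m)) : ‖x‖^2 = ∑ i, x i ^ 2 := by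
  rw [EuclideanSpace.norm_eq, Real.sq_sqrt (by positivity)]
  simp [sq_abs]

lemma norm_le_iff_sq {E : Type*} [NormedAddCommGroup E] (z : E) {ρ : ℝ} (hρ : 0 ≤ ρ) :
    ‖z‖ ≤ ρ ↔ ‖z‖^2 ≤ ρ^2 :=
  (pow_le_pow_iff_left₀ (norm_nonneg z) hρ two_ne_zero).symm

lemma vol_sumsq {n : ℕ} {ρ : ℝ} (hρ : 0 ≤ ρ) :
    volume {y : Fin n → ℝ | ∑ j, y j ^ 2 ≤ ρ ^ 2}
      = ENNReal.ofReal (ρ ^ n) * volume (Metric.ball (0 : EuclideanSpace ℝ (Fin n)) 1) := by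
  have hset : {y : Fin n → ℝ | ∑ j, y j ^ 2 ≤ ρ ^ 2}
      = (MeasurableEquiv.toLp 2 (Fin n → ℝ)) ⁻¹'
        (Metric.closedBall (0 : EuclideanSpace ℝ (Fin n)) ρ) := by
    ext y
    simp only [Set.mem_setOf_eq, Set.mem_preimage, Metric.mem_closedBall, dist_zero_right]
    rw [norm_le_iff_sq _ hρ, euc_normsq]
    rfl
  have hs : MeasurePreserving (MeasurableEquiv.toLp 2 (Fin n → ℝ)) volume volume :=
    (EuclideanSpace.volume_preserving_symm_measurableEquiv_toLp (Fin n)).symm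
  rw [hset, hs.measure_preimage measurableSet_closedBall.nullMeasurableSet,
    Measure.addHaar_closedBall _ _ hρ, finrank_euclideanSpace, Fintype.card_fin]

lemma lint_piece {n : ℕ} {a c ℓ : ℝ} (hac : a < c) (hℓ : 0 ≤ ℓ) :
    ∫⁻ t in Set.Ioo a c, ENNReal.ofReal ((ℓ / (c - a) * (t - a)) ^ n)
      = ENNReal.ofReal (ℓ ^ n * (c - a) / (n + 1)) := by
  have hca : (0:ℝ) < c - a := by linarith
  have hint : ∫ t in Set.Ioo a c, (ℓ / (c - a) * (t - a)) ^ n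
      = ℓ ^ n * (c - a) / (n + 1) := by
    rw [← MeasureTheory.integral_Ioc_eq_integral_Ioo,
      ← intervalIntegral.integral_of_le hac.le]
    rw [intervalIntegral.integral_comp_sub_right (fun x => (ℓ / (c - a) * x) ^ n) a]
    simp_rw [mul_pow]
    rw [intervalIntegral.integral_const_mul, sub_self, integral_pow]
    field_simp
    have hne : (c - a)⁻¹ ^ n * (c - a) ^ n = 1 := by rw [← mul_pow, inv_mul_cancel₀ hca.ne', one_pow]
    linear_combination (ℓ ^ n * c - ℓ ^ n * a) * hne
  rw [← MeasureTheory.ofReal_integral_eq_lintegral_ofReal, hint]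
  · exact (Continuous.integrableOn_Icc (by fun_prop)).mono_set Set.Ioo_subset_Icc_self
  · filter_upwards [ae_restrict_mem measurableSet_Ioo] with t ht
    have h1 : 0 ≤ t - a := by linarith [ht.1]
    positivity

lemma lint_piece' {n : ℕ} {a c ℓ : ℝ} (hac : a < c) (hℓ : 0 ≤ ℓ) :
    ∫⁻ t in Set.Ioo a c, ENNReal.ofReal ((ℓ / (c - a) * (c - t)) ^ n)
      = ENNReal.ofReal (ℓ ^ n * (c - a) / (n + 1)) := by
  have hca : (0:ℝ) < c - a := by linarith
  have hint : ∫ t in Set.Ioo a c, (ℓ / (c - a) * (c - t)) ^ n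
      = ℓ ^ n * (c - a) / (n + 1) := by
    rw [← MeasureTheory.integral_Ioc_eq_integral_Ioo,
      ← intervalIntegral.integral_of_le hac.le]
    rw [intervalIntegral.integral_comp_sub_left (fun x => (ℓ / (c - a) * x) ^ n) c]
    simp_rw [mul_pow]
    rw [intervalIntegral.integral_const_mul, sub_self, integral_pow]
    field_simp
    have hne : (c - a)⁻¹ ^ n * (c - a) ^ n = 1 := by rw [← mul_pow, inv_mul_cancel₀ hca.ne', one_pow]
    linear_combination (ℓ ^ n * c - ℓ ^ n * a) * hne
  rw [← MeasureTheory.ofReal_integral_eq_lintegral_ofReal, hint]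
  · exact (Continuous.integrableOn_Icc (by fun_prop)).mono_set Set.Ioo_subset_Icc_self
  · filter_upwards [ae_restrict_mem measurableSet_Ioo] with t ht
    have h1 : 0 ≤ c - t := by linarith [ht.2]
    positivity

lemma fubini_reduce {n : ℕ} (r rp D : ℝ) (O Op : EuclideanSpace ℝ (Fin (n+1)))
    (hD0 : 0 < D) (hdist : ‖O - Op‖ = D)
    (b : OrthonormalBasis (Fin (n+1)) ℝ (EuclideanSpace ℝ (Fin (n+1))))
    (hb0 : b 0 = D⁻¹ • (Op - O)) (hr : 0 < r) (hrp : 0 < rp) :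
    volume (Metric.closedBall O r ∩ Metric.closedBall Op rp)
      = ∫⁻ t, volume {y : Fin n → ℝ |
          t^2 + ∑ j, y j ^2 ≤ r^2 ∧ (t - D)^2 + ∑ j, y j ^2 ≤ rp^2} := by
  have hOpO : ‖Op - O‖ = D := by rw [norm_sub_rev, hdist]
  have hrepr : b.repr (Op - O) = EuclideanSpace.single 0 D := by
    have h1 : Op - O = D • b 0 := by
      rw [hb0, smul_smul, mul_inv_cancel₀ hD0.ne', one_smul]
    rw [h1, _root_.map_smul, b.repr_self]
    ext j
    simp [EuclideanSpace.single_apply]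
  set Φ : EuclideanSpace ℝ (Fin (n+1)) → ℝ × (Fin n → ℝ) := fun x =>
    (MeasurableEquiv.piFinSuccAbove (fun _ : Fin (n+1) => ℝ) 0)
      ((MeasurableEquiv.toLp 2 (Fin (n+1) → ℝ)).symm (b.repr (x - O))) with hΦ
  have hMP : MeasurePreserving Φ volume volume :=
    ((volume_preserving_piFinSuccAbove (fun _ : Fin (n+1) => ℝ) 0).comp
      ((EuclideanSpace.volume_preserving_symm_measurableEquiv_toLp (Fin (n+1))).comp
        ((b.measurePreserving_repr).comp (measurePreserving_sub_right volume O))))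
  set S : Set (ℝ × (Fin n → ℝ)) :=
    {p | p.1^2 + ∑ j, p.2 j ^2 ≤ r^2 ∧ (p.1 - D)^2 + ∑ j, p.2 j ^2 ≤ rp^2} with hS
  have m0 : Measurable (fun p : ℝ × (Fin n → ℝ) => ∑ j, p.2 j ^ 2) :=
    Finset.measurable_sum _ (fun j _ => ((measurable_pi_apply j).comp measurable_snd).pow_const 2)
  have hSmeas : MeasurableSet S := by
    apply MeasurableSet.inter
    · exact measurableSet_le ((measurable_fst.pow_const 2).add m0) measurable_const
    · exact measurableSet_le (((measurable_fst.sub measurable_const).pow_const 2).add m0)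
        measurable_const
  have hlens : Metric.closedBall O r ∩ Metric.closedBall Op rp = Φ ⁻¹' S := by
    ext x
    have hΦx : Φ x = (b.repr (x-O) 0, fun j => b.repr (x-O) j.succ) := by
      simp only [hΦ, MeasurableEquiv.piFinSuccAbove, MeasurableEquiv.coe_mk,
        Fin.insertNthEquiv, map_sub]
      rfl
    simp only [Set.mem_inter_iff, Metric.mem_closedBall, dist_eq_norm, Set.mem_preimage, hΦx,
      hS, Set.mem_setOf_eq]
    have e1 : ‖x - O‖^2 = (b.repr (x-O) 0)^2 + ∑ j : Fin n, (b.repr (x-O) j.succ)^2 := by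
      rw [← b.repr.norm_map (x - O), euc_normsq, Fin.sum_univ_succ]
    have e2 : ‖x - Op‖^2 = (b.repr (x-O) 0 - D)^2 + ∑ j : Fin n, (b.repr (x-O) j.succ)^2 := by
      have h3 : x - Op = (x - O) - (Op - O) := by abel
      rw [← b.repr.norm_map (x - Op), h3, map_sub, hrepr, euc_normsq, Fin.sum_univ_succ]
      simp [EuclideanSpace.single_apply, Fin.succ_ne_zero]
    rw [norm_le_iff_sq _ hr.le, norm_le_iff_sq _ hrp.le, e1, e2]
  rw [hlens, hMP.measure_preimage hSmeas.nullMeasurableSet, Measure.volume_eq_prod,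
    Measure.prod_apply hSmeas]
  rfl

lemma slice_lb {n : ℕ} {r rp D t ρ : ℝ} (hρ : 0 ≤ ρ)
    (h1 : ρ^2 ≤ r^2 - t^2) (h2 : ρ^2 ≤ rp^2 - (D-t)^2) :
    ENNReal.ofReal (ρ^n) * volume (Metric.ball (0 : EuclideanSpace ℝ (Fin n)) 1)
      ≤ volume {y : Fin n → ℝ |
          t^2 + ∑ j, y j ^2 ≤ r^2 ∧ (t - D)^2 + ∑ j, y j ^2 ≤ rp^2} := by
  rw [← vol_sumsq hρ]
  apply measure_mono
  intro y hy
  simp only [Set.mem_setOf_eq] at hy ⊢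
  exact ⟨by nlinarith, by nlinarith⟩

set_option maxHeartbeats 1000000 in
/-- Main geometric estimate (normalized form). -/
lemma main {n : ℕ} (r rp h : ℝ) (hrp : 0 < rp) (hrr : rp ≤ r)
    (O Op : EuclideanSpace ℝ (Fin (n+1))) (hh0 : 0 < h) (hh : h ≤ rp)
    (hdist : ‖O - Op‖ = r + rp - h) :
    volume (Metric.ball (0 : EuclideanSpace ℝ (Fin n)) 1) *
      ENNReal.ofReal (Real.sqrt (h * rp / 2) ^ n * h / (n + 1)) ≤
      MeasureTheory.volume (Metric.closedBall O r ∩ Metric.closedBall Op rp) := by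
  have hr : 0 < r := lt_of_lt_of_le hrp hrr
  obtain ⟨D, hD⟩ : ∃ x : ℝ, x = r + rp - h := ⟨_, rfl⟩
  have hD0 : 0 < D := by rw [hD]; linarith
  obtain ⟨t₀, ht₀⟩ : ∃ x : ℝ, x = (D^2 + r^2 - rp^2) / (2*D) := ⟨_, rfl⟩
  obtain ⟨a, ha⟩ : ∃ x : ℝ, x = r - h := ⟨_, rfl⟩
  have ha0 : 0 ≤ a := by rw [ha]; linarith
  have hat : a < t₀ := by
    rw [ha, ht₀, lt_div_iff₀ (by linarith), hD]
    nlinarith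
  have ht₀r : t₀ < r := by
    rw [ht₀, div_lt_iff₀ (by linarith), hD]
    nlinarith
  have hrD : r ≤ D := by rw [hD]; linarith
  obtain ⟨ℓsq, hℓsq⟩ : ∃ x : ℝ, x = r^2 - t₀^2 := ⟨_, rfl⟩
  have hℓsq2 : ℓsq = rp^2 - (D - t₀)^2 := by
    rw [hℓsq, ht₀]
    have h2D : (2:ℝ)*D ≠ 0 := by positivity
    field_simp
    rw [hD]
    ring
  have hℓsqlb : h * rp / 2 ≤ ℓsq := by
    have hP : 0 ≤ (2*r - h)*(2*r + 2*rp - h) - 2*D^2 := by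
      rw [hD]
      nlinarith [mul_nonneg (sub_nonneg.2 hrr) (by linarith : (0:ℝ) ≤ r + rp),
        mul_nonneg hh0.le (by linarith : (0:ℝ) ≤ 2*rp - h)]
    have hid : ℓsq * (4*D^2) = h*(2*rp - h)*((2*r - h)*(2*r + 2*rp - h)) := by
      rw [hℓsq, ht₀]
      have h2D : (2:ℝ)*D ≠ 0 := by positivity
      field_simp
      rw [hD]
      ring
    have hmain : h * rp / 2 * (4*D^2) ≤ ℓsq * (4*D^2) := by
      rw [hid]
      nlinarith [mul_nonneg (mul_nonneg hh0.le (by linarith : (0:ℝ) ≤ 2*rp - h)) hP,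
        mul_nonneg (mul_nonneg hh0.le (by linarith : (0:ℝ) ≤ rp - h)) (sq_nonneg D)]
    exact le_of_mul_le_mul_right hmain (by positivity)
  have hℓsq0 : 0 < ℓsq := lt_of_lt_of_le (by positivity) hℓsqlb
  obtain ⟨ℓ, hℓ⟩ : ∃ x : ℝ, x = Real.sqrt ℓsq := ⟨_, rfl⟩
  have hℓ0 : 0 < ℓ := by rw [hℓ]; exact Real.sqrt_pos.2 hℓsq0
  have hℓ2 : ℓ^2 = ℓsq := by rw [hℓ]; exact Real.sq_sqrt hℓsq0.le
  -- the orthonormal basis adapted to the axis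
  have hcard : Module.finrank ℝ (EuclideanSpace ℝ (Fin (n+1))) = Fintype.card (Fin (n+1)) := by
    simp [finrank_euclideanSpace]
  have hOpO : ‖Op - O‖ = D := by rw [norm_sub_rev, hdist, hD]
  have hun : Orthonormal ℝ (Set.restrict {(0 : Fin (n+1))} (fun _ => D⁻¹ • (Op - O))) := by
    constructor
    · rintro ⟨i, hi⟩
      show ‖D⁻¹ • (Op - O)‖ = 1
      rw [norm_smul, hOpO]
      simp only [norm_inv, Real.norm_eq_abs, abs_of_pos hD0]
      rw [inv_mul_cancel₀ hD0.ne']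
    · rintro ⟨i, hi⟩ ⟨j, hj⟩ hij
      exact absurd (Subtype.ext ((hi.trans hj.symm : (i:Fin (n+1)) = j))) hij
  obtain ⟨b, hb⟩ := hun.exists_orthonormalBasis_extension_of_card_eq hcard
  have hb0 : b 0 = D⁻¹ • (Op - O) := hb 0 rfl
  rw [fubini_reduce r rp D O Op hD0 (by rw [hdist, hD]) b hb0 hr hrp]
  clear hb0 hb hun hcard hOpO hdist b O Op
  -- the two linear profiles
  have key1 : ∀ t ∈ Set.Ioo a t₀,
      ENNReal.ofReal ((ℓ / (t₀ - a) * (t - a))^n) *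
        volume (Metric.ball (0 : EuclideanSpace ℝ (Fin n)) 1)
        ≤ volume {y : Fin n → ℝ |
          t^2 + ∑ j, y j ^2 ≤ r^2 ∧ (t - D)^2 + ∑ j, y j ^2 ≤ rp^2} := by
    intro t ht
    obtain ⟨ht1, ht2⟩ := ht
    have hta : 0 ≤ t - a := by linarith
    have hg : 0 ≤ ℓ / (t₀ - a) * (t - a) := by
      have h5 : 0 < t₀ - a := by linarith
      positivity
    apply slice_lb hg
    · -- since g ≤ ℓ and t ≤ t₀
      have hgle : ℓ / (t₀ - a) * (t - a) ≤ ℓ := by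
        rw [div_mul_eq_mul_div, div_le_iff₀ (by linarith)]
        nlinarith
      have hsq : (ℓ / (t₀ - a) * (t - a))^2 ≤ ℓ^2 := pow_le_pow_left₀ hg hgle 2
      rw [hℓ2] at hsq
      have h7 : t^2 ≤ t₀^2 := by nlinarith
      linarith [hℓsq ▸ hsq]
    · -- chord estimate on the rp circle
      have hf1 : ℓsq = (t₀ - a) * (rp + D - t₀) := by
        rw [hℓsq2, hD, ha]; ring
      have hf2 : rp^2 - (D - t)^2 = (t - a) * (rp + D - t) := by
        rw [hD, ha]; ring
      rw [hf2, mul_pow, div_pow, div_mul_eq_mul_div,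
        div_le_iff₀ (pow_pos (by linarith : (0:ℝ) < t₀ - a) 2)]
      rw [← hℓ2] at hf1
      rw [hf1]
      nlinarith [mul_nonneg (mul_nonneg (mul_nonneg hta (by linarith : (0:ℝ) ≤ t₀ - a))
        (by rw [hD, ha]; linarith : (0:ℝ) ≤ rp + D - a)) (by linarith : (0:ℝ) ≤ t₀ - t)]
  have key2 : ∀ t ∈ Set.Ioo t₀ r,
      ENNReal.ofReal ((ℓ / (r - t₀) * (r - t))^n) *
        volume (Metric.ball (0 : EuclideanSpace ℝ (Fin n)) 1)
        ≤ volume {y : Fin n → ℝ |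
          t^2 + ∑ j, y j ^2 ≤ r^2 ∧ (t - D)^2 + ∑ j, y j ^2 ≤ rp^2} := by
    intro t ht
    obtain ⟨ht1, ht2⟩ := ht
    have hta : 0 ≤ r - t := by linarith
    have hg : 0 ≤ ℓ / (r - t₀) * (r - t) := by
      have h5 : 0 < r - t₀ := by linarith
      positivity
    apply slice_lb hg
    · -- chord estimate on the r circle
      have hf3 : ℓsq = (r - t₀) * (r + t₀) := by rw [hℓsq]; ring
      have hf4 : r^2 - t^2 = (r - t) * (r + t) := by ring
      rw [hf4, mul_pow, div_pow, div_mul_eq_mul_div,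
        div_le_iff₀ (pow_pos (by linarith : (0:ℝ) < r - t₀) 2)]
      rw [← hℓ2] at hf3
      rw [hf3]
      nlinarith [mul_nonneg (mul_nonneg (mul_nonneg hta (by linarith : (0:ℝ) ≤ r - t₀))
        (by linarith : (0:ℝ) ≤ 2*r)) (by linarith : (0:ℝ) ≤ t - t₀)]
    · -- since g ≤ ℓ and (D-t)^2 ≤ (D-t₀)^2
      have hgle : ℓ / (r - t₀) * (r - t) ≤ ℓ := by
        rw [div_mul_eq_mul_div, div_le_iff₀ (by linarith)]
        nlinarith
      have hsq : (ℓ / (r - t₀) * (r - t))^2 ≤ ℓ^2 := pow_le_pow_left₀ hg hgle 2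
      rw [hℓ2] at hsq
      have h8 : (D-t)^2 ≤ (D-t₀)^2 := by nlinarith
      linarith [hℓsq2 ▸ hsq]
  -- put the integral bounds together
  have hdisj : Disjoint (Set.Ioo a t₀) (Set.Ioo t₀ r) := by
    rw [Set.disjoint_left]
    rintro x ⟨_, h2⟩ ⟨h3, _⟩
    linarith
  have hsum : ENNReal.ofReal (ℓ^n * (t₀ - a) / (n+1)) *
        volume (Metric.ball (0 : EuclideanSpace ℝ (Fin n)) 1)
      + ENNReal.ofReal (ℓ^n * (r - t₀) / (n+1)) *
        volume (Metric.ball (0 : EuclideanSpace ℝ (Fin n)) 1)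
      ≤ ∫⁻ t, volume {y : Fin n → ℝ |
          t^2 + ∑ j, y j ^2 ≤ r^2 ∧ (t - D)^2 + ∑ j, y j ^2 ≤ rp^2} := by
    have hmeas1 : Measurable fun t : ℝ => ENNReal.ofReal ((ℓ / (t₀ - a) * (t - a))^n) := by
      fun_prop
    have hmeas2 : Measurable fun t : ℝ => ENNReal.ofReal ((ℓ / (r - t₀) * (r - t))^n) := by
      fun_prop
    calc ENNReal.ofReal (ℓ^n * (t₀ - a) / (n+1)) *
          volume (Metric.ball (0 : EuclideanSpace ℝ (Fin n)) 1)
        + ENNReal.ofReal (ℓ^n * (r - t₀) / (n+1)) *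
          volume (Metric.ball (0 : EuclideanSpace ℝ (Fin n)) 1)
        = (∫⁻ t in Set.Ioo a t₀, ENNReal.ofReal ((ℓ / (t₀ - a) * (t - a))^n)) *
            volume (Metric.ball (0 : EuclideanSpace ℝ (Fin n)) 1)
          + (∫⁻ t in Set.Ioo t₀ r, ENNReal.ofReal ((ℓ / (r - t₀) * (r - t))^n)) *
            volume (Metric.ball (0 : EuclideanSpace ℝ (Fin n)) 1) := by
          rw [lint_piece hat hℓ0.le, lint_piece' ht₀r hℓ0.le]
      _ = (∫⁻ t in Set.Ioo a t₀, ENNReal.ofReal ((ℓ / (t₀ - a) * (t - a))^n) *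
            volume (Metric.ball (0 : EuclideanSpace ℝ (Fin n)) 1))
          + (∫⁻ t in Set.Ioo t₀ r, ENNReal.ofReal ((ℓ / (r - t₀) * (r - t))^n) *
            volume (Metric.ball (0 : EuclideanSpace ℝ (Fin n)) 1)) := by
          rw [lintegral_mul_const _ hmeas1, lintegral_mul_const _ hmeas2]
      _ ≤ (∫⁻ t in Set.Ioo a t₀, volume {y : Fin n → ℝ |
              t^2 + ∑ j, y j ^2 ≤ r^2 ∧ (t - D)^2 + ∑ j, y j ^2 ≤ rp^2})
          + (∫⁻ t in Set.Ioo t₀ r, volume {y : Fin n → ℝ |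
              t^2 + ∑ j, y j ^2 ≤ r^2 ∧ (t - D)^2 + ∑ j, y j ^2 ≤ rp^2}) := by
          exact add_le_add (setLIntegral_mono' measurableSet_Ioo key1)
            (setLIntegral_mono' measurableSet_Ioo key2)
      _ = ∫⁻ t in Set.Ioo a t₀ ∪ Set.Ioo t₀ r, volume {y : Fin n → ℝ |
              t^2 + ∑ j, y j ^2 ≤ r^2 ∧ (t - D)^2 + ∑ j, y j ^2 ≤ rp^2} := by
          rw [lintegral_union measurableSet_Ioo hdisj]
      _ ≤ _ := setLIntegral_le_lintegral _ _
  refine le_trans ?_ hsum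
  -- combine the two cone volumes
  have h1 : (0:ℝ) ≤ ℓ^n * (t₀ - a) / (n+1) :=
    div_nonneg (mul_nonneg (pow_nonneg hℓ0.le n) (by linarith)) (by positivity)
  have h2 : (0:ℝ) ≤ ℓ^n * (r - t₀) / (n+1) :=
    div_nonneg (mul_nonneg (pow_nonneg hℓ0.le n) (by linarith)) (by positivity)
  have hra : ℓ^n * (t₀ - a) / (n+1) + ℓ^n * (r - t₀) / (n+1) = ℓ^n * h / (n+1) := by
    rw [ha]; ring
  rw [← add_mul, ← ENNReal.ofReal_add h1 h2, hra,
    mul_comm (ENNReal.ofReal (ℓ^n * h / (n+1)))]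
  refine mul_le_mul_right (ENNReal.ofReal_le_ofReal ?_) _
  have hsl : Real.sqrt (h * rp / 2) ≤ ℓ := by
    rw [hℓ]
    exact Real.sqrt_le_sqrt hℓsqlb
  have hpow : Real.sqrt (h * rp / 2) ^ n ≤ ℓ ^ n :=
    pow_le_pow_left₀ (Real.sqrt_nonneg _) hsl n
  have hn1 : (0:ℝ) < (n:ℝ) + 1 := by positivity
  have := mul_le_mul_of_nonneg_right hpow hh0.le
  exact div_le_div_of_nonneg_right this hn1.le

end Stmt6Aux
end Stmt6AuxSection

open MeasureTheory in
theorem stmt_6 {d : ℕ} (hd : 1 ≤ d) (r rp h : ℝ) (hrp : 0 ≤ rp) (hrr : rp ≤ r)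
    (O Op : EuclideanSpace ℝ (Fin d)) (hh0 : 0 ≤ h) (hh : h ≤ rp)
    (hdist : ‖O - Op‖ = r + rp - h) :
    ENNReal.ofReal
        ((MeasureTheory.volume (Metric.ball (0 : EuclideanSpace ℝ (Fin (d - 1))) 1)).toReal /
            ((d : ℝ) * 2 ^ (((d : ℝ) - 1) / 2)) * h ^ (((d : ℝ) + 1) / 2) *
          rp ^ (((d : ℝ) - 1) / 2)) ≤
      MeasureTheory.volume (Metric.closedBall O r ∩ Metric.closedBall Op rp) := by
  obtain ⟨n, rfl⟩ : ∃ n, d = n + 1 := ⟨d - 1, (Nat.succ_pred_eq_of_pos hd).symm⟩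
  rcases eq_or_lt_of_le hh0 with hh0' | hpos
  · rw [← hh0', Real.zero_rpow (by positivity), mul_zero, zero_mul, ENNReal.ofReal_zero]
    exact bot_le
  have hrp' : 0 < rp := lt_of_lt_of_le hpos hh
  have key := Stmt6Aux.main r rp h hrp' hrr O Op hpos hh hdist
  refine le_trans ?_ key
  have hne : volume (Metric.ball (0 : EuclideanSpace ℝ (Fin n)) 1) ≠ ⊤ :=
    measure_ball_lt_top.ne
  have hc : (0:ℝ) ≤ (volume (Metric.ball (0 : EuclideanSpace ℝ (Fin n)) 1)).toReal :=
    ENNReal.toReal_nonneg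
  have hXc : volume (Metric.ball (0 : EuclideanSpace ℝ (Fin n)) 1) *
      ENNReal.ofReal (Real.sqrt (h * rp / 2) ^ n * h / (n + 1))
      = ENNReal.ofReal ((volume (Metric.ball (0 : EuclideanSpace ℝ (Fin n)) 1)).toReal *
          (Real.sqrt (h * rp / 2) ^ n * h / (n + 1))) := by
    rw [ENNReal.ofReal_mul hc, ENNReal.ofReal_toReal hne]
  rw [hXc]
  apply ENNReal.ofReal_le_ofReal
  push_cast
  have en : ((n:ℝ)+1-1)/2 = (n:ℝ)/2 := by ring
  have en2 : ((n:ℝ)+1+1)/2 = (n:ℝ)/2 + 1 := by ring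
  rw [en, en2]
  have hZ : (0:ℝ) < 2 ^ ((n:ℝ)/2) := Real.rpow_pos_of_pos two_pos _
  have hs : Real.sqrt (h*rp/2) ^ n = h^((n:ℝ)/2) * rp^((n:ℝ)/2) / 2^((n:ℝ)/2) := by
    rw [← Real.rpow_natCast (Real.sqrt (h*rp/2)) n, Real.sqrt_eq_rpow,
      ← Real.rpow_mul (by positivity)]
    have : 1/2 * (n:ℝ) = (n:ℝ)/2 := by ring
    rw [this, Real.div_rpow (by positivity) (by norm_num),
      Real.mul_rpow hpos.le hrp]
  have hh2 : h^((n:ℝ)/2 + 1) = h^((n:ℝ)/2) * h := by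
    rw [Real.rpow_add hpos, Real.rpow_one]
  rw [hs, hh2]
  apply le_of_eq
  have hn1 : ((n:ℝ)+1) ≠ 0 := by positivity
  field_simp
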